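/- Let X and Y be compact Hausdorff spaces, a ∈ ℂ, and p(z,w) = zw + az + aw + a². Suppose T : C(X) → C(Y) is surjective and σ(p(Tf, Tg)) = σ(p(f, g)) for all f, g ∈ C(X). Then there exist a continuous function η : Y → {−1, 1} and a homeomorphism Φ : Y → X such that Tf(y) = η(y)·f(Φ(y)) + a·(η(y) − 1) for all f ∈ C(X) and y ∈ Y. -/

import Mathlib

open Set

namespace Stmt19Aux

variable {X Y : Type*} [TopologicalSpace X] [CompactSpace X] [T2Space X]
  [TopologicalSpace Y] [CompactSpace Y] [T2Space Y]

/-- Embed a real-valued continuous map into complex-valued ones. -/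
noncomputable def cplx {Z : Type*} [TopologicalSpace Z] (h : C(Z, ℝ)) : C(Z, ℂ) :=
  ⟨fun z => (h z : ℂ), Complex.continuous_ofReal.comp h.continuous⟩

@[simp] lemma cplx_apply {Z : Type*} [TopologicalSpace Z] (h : C(Z, ℝ)) (z : Z) :
    cplx h z = (h z : ℂ) := rfl

lemma norm_eq_of_range_eq {u : C(Y, ℂ)} {w : C(X, ℂ)} (h : range ⇑u = range ⇑w) :
    ‖u‖ = ‖w‖ := by
  apply le_antisymm
  · refine (u.norm_le (norm_nonneg w)).2 fun y => ?_
    obtain ⟨x, hx⟩ : u y ∈ range ⇑w := h ▸ mem_range_self y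
    rw [← hx]; exact w.norm_coe_le_norm x
  · refine (w.norm_le (norm_nonneg u)).2 fun x => ?_
    obtain ⟨y, hy⟩ : w x ∈ range ⇑u := h.symm ▸ mem_range_self x
    rw [← hy]; exact u.norm_coe_le_norm y

section Core

variable (R : C(X, ℂ) → C(Y, ℂ))

lemma hrg (hone : R 1 = 1)
    (hr : ∀ f g : C(X, ℂ), range ⇑(R f * R g) = range ⇑(f * g)) (f : C(X, ℂ)) :
    range ⇑(R f) = range ⇑f := by
  have := hr f 1
  rwa [hone, mul_one, mul_one] at this

/-- values of a preimage of a `[0,1]`-valued function are real in `[0,1]`. -/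
lemma mem01 (hone : R 1 = 1)
    (hr : ∀ f g : C(X, ℂ), range ⇑(R f * R g) = range ⇑(f * g))
    {v : C(Y, ℝ)} (hv : ∀ z, v z ∈ Icc (0:ℝ) 1) {g : C(X, ℂ)} (hg : R g = cplx v) (x : X) :
    ∃ t : ℝ, t ∈ Icc (0:ℝ) 1 ∧ (t : ℂ) = g x := by
  have h1 : range ⇑g = range ⇑(cplx v) := by
    rw [← hrg R hone hr g, hg]
  obtain ⟨z, hz⟩ : g x ∈ range ⇑(cplx v) := h1 ▸ mem_range_self x
  exact ⟨v z, hv z, hz⟩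

lemma sub1 (hone : R 1 = 1)
    (hr : ∀ f g : C(X, ℂ), range ⇑(R f * R g) = range ⇑(f * g))
    {v v' : C(Y, ℝ)} {gv gv' : C(X, ℂ)} (hgv : R gv = cplx v) (hgv' : R gv' = cplx v')
    (hv' : ∀ z, v' z ∈ Icc (0:ℝ) 1) (hv0 : ∀ z, 0 ≤ v z) (hle : ∀ z, v z ≤ v' z)
    {x : X} (hx : gv x = 1) : gv' x = 1 := by
  obtain ⟨t, ht, hts⟩ := mem01 R hone hr hv' hgv' x
  rcases eq_or_lt_of_le ht.2 with h1 | hlt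
  · rw [← hts, h1]; norm_num
  exfalso
  set c : ℝ := (1 + t) / 2 with hc
  have hc0 : 0 < c := by have := ht.1; simp only [hc]; linarith
  have hc1 : c < 1 := by simp only [hc]; linarith
  have htc : t < c := by simp only [hc]; linarith
  set U : Set X := {x' | ‖gv' x'‖ < c} with hU
  have hUo : IsOpen U := isOpen_lt (gv'.continuous.norm) continuous_const
  have hxU : x ∈ U := by
    simp only [hU, mem_setOf_eq, ← hts, Complex.norm_real, Real.norm_eq_abs]
    rw [abs_of_nonneg ht.1]; exact htc
  obtain ⟨h, h0, h1, hicc⟩ := exists_continuous_zero_one_of_isClosed hUo.isClosed_compl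
    (isClosed_singleton : IsClosed {x})
    (by rw [disjoint_singleton_right]; simpa using hxU)
  have hhx : h x = 1 := h1 rfl
  have hb1 : ‖cplx h * gv'‖ ≤ c := by
    refine ((cplx h * gv').norm_le hc0.le).2 fun x' => ?_
    by_cases hx' : x' ∈ U
    · rw [ContinuousMap.mul_apply, norm_mul]
      have h1' : ‖cplx h x'‖ ≤ 1 := by
        simp only [cplx_apply, Complex.norm_real, Real.norm_eq_abs]
        rw [abs_of_nonneg (hicc x').1]; exact (hicc x').2
      have h2' : ‖gv' x'‖ ≤ c := le_of_lt hx'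
      calc ‖cplx h x'‖ * ‖gv' x'‖ ≤ 1 * c := by
            exact mul_le_mul h1' h2' (norm_nonneg _) zero_le_one
        _ = c := one_mul c
    · have : h x' = 0 := h0 hx'
      simp [this, hc0.le]
  have htrans : ‖R (cplx h) * cplx v'‖ ≤ c := by
    have heq := norm_eq_of_range_eq (hr (cplx h) gv')
    rw [hgv'] at heq
    rw [heq]; exact hb1
  have hptw : ‖R (cplx h) * cplx v‖ ≤ ‖R (cplx h) * cplx v'‖ := by
    refine ((R (cplx h) * cplx v).norm_le (norm_nonneg _)).2 fun z => ?_
    have step : ‖(R (cplx h) * cplx v) z‖ ≤ ‖(R (cplx h) * cplx v') z‖ := by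
      simp only [ContinuousMap.mul_apply, norm_mul, cplx_apply, Complex.norm_real, Real.norm_eq_abs]
      refine mul_le_mul_of_nonneg_left ?_ (norm_nonneg _)
      rw [abs_of_nonneg (hv0 z), abs_of_nonneg (le_trans (hv0 z) (hle z))]
      exact hle z
    exact le_trans step ((R (cplx h) * cplx v').norm_coe_le_norm z)
  have hlow : (1:ℝ) ≤ ‖R (cplx h) * cplx v‖ := by
    have heq := norm_eq_of_range_eq (hr (cplx h) gv)
    rw [hgv] at heq
    rw [heq]
    have : ‖(cplx h * gv) x‖ = 1 := by
      simp [ContinuousMap.mul_apply, hhx, hx]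
    rw [← this]; exact (cplx h * gv).norm_coe_le_norm x
  linarith

lemma claimZ (hone : R 1 = 1)
    (hr : ∀ f g : C(X, ℂ), range ⇑(R f * R g) = range ⇑(f * g))
    {y : Y} {x₀ : X}
    (hx₀ : ∀ v : C(Y, ℝ), v y = 1 → (∀ z, v z ∈ Icc (0:ℝ) 1) →
      ∃ g : C(X, ℂ), R g = cplx v ∧ g x₀ = 1)
    {h : C(X, ℝ)} (hicc : ∀ x, h x ∈ Icc (0:ℝ) 1) (hhx : h x₀ = 1) :
    R (cplx h) y = 1 := by
  obtain ⟨t, ht, hts⟩ : ∃ t : ℝ, t ∈ Icc (0:ℝ) 1 ∧ (t : ℂ) = R (cplx h) y := by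
    have h1 : range ⇑(R (cplx h)) = range ⇑(cplx h) := hrg R hone hr (cplx h)
    obtain ⟨x, hx⟩ : R (cplx h) y ∈ range ⇑(cplx h) := h1 ▸ mem_range_self y
    exact ⟨h x, hicc x, hx⟩
  rcases eq_or_lt_of_le ht.2 with h1 | hlt
  · rw [← hts, h1]; norm_num
  exfalso
  set c : ℝ := (1 + t) / 2 with hc
  have hc0 : 0 < c := by have := ht.1; simp only [hc]; linarith
  have hc1 : c < 1 := by simp only [hc]; linarith
  have htc : t < c := by simp only [hc]; linarith
  set V : Set Y := {z | ‖R (cplx h) z‖ < c} with hV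
  have hVo : IsOpen V := isOpen_lt ((R (cplx h)).continuous.norm) continuous_const
  have hyV : y ∈ V := by
    simp only [hV, mem_setOf_eq, ← hts, Complex.norm_real, Real.norm_eq_abs]
    rw [abs_of_nonneg ht.1]; exact htc
  obtain ⟨v, hv0, hv1, hvicc⟩ := exists_continuous_zero_one_of_isClosed hVo.isClosed_compl
    (isClosed_singleton : IsClosed {y})
    (by rw [disjoint_singleton_right]; simpa using hyV)
  obtain ⟨g, hg, hgx⟩ := hx₀ v (hv1 rfl) hvicc
  have hub : ‖R (cplx h) * cplx v‖ ≤ c := by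
    refine ((R (cplx h) * cplx v).norm_le hc0.le).2 fun z => ?_
    by_cases hz : z ∈ V
    · rw [ContinuousMap.mul_apply, norm_mul]
      have h1' : ‖cplx v z‖ ≤ 1 := by
        simp only [cplx_apply, Complex.norm_real, Real.norm_eq_abs]
        rw [abs_of_nonneg (hvicc z).1]; exact (hvicc z).2
      calc ‖R (cplx h) z‖ * ‖cplx v z‖ ≤ c * 1 :=
            mul_le_mul (le_of_lt hz) h1' (norm_nonneg _) hc0.le
        _ = c := mul_one c
    · have : v z = 0 := hv0 hz
      simp [ContinuousMap.mul_apply, this, hc0.le]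
  have heq := norm_eq_of_range_eq (hr (cplx h) g)
  rw [hg] at heq
  have hlow : (1:ℝ) ≤ ‖R (cplx h) * cplx v‖ := by
    rw [heq]
    have : ‖(cplx h * g) x₀‖ = 1 := by
      simp [ContinuousMap.mul_apply, hhx, hgx]
    rw [← this]; exact (cplx h * g).norm_coe_le_norm x₀
  linarith

lemma value (hone : R 1 = 1)
    (hr : ∀ f g : C(X, ℂ), range ⇑(R f * R g) = range ⇑(f * g))
    {y : Y} {x₀ : X}
    (hx₀ : ∀ v : C(Y, ℝ), v y = 1 → (∀ z, v z ∈ Icc (0:ℝ) 1) →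
      ∃ g : C(X, ℂ), R g = cplx v ∧ g x₀ = 1)
    (f : C(X, ℂ)) : R f y = f x₀ := by
  set lam : ℂ := R f y with hlam
  set mu : ℂ := f x₀ with hmu
  -- Step (a)+(b) : mu lies on the segment [0, lam]
  have hseg : ∃ t : ℝ, t ∈ Icc (0:ℝ) 1 ∧ mu = (t : ℂ) * lam := by
    have hcl : IsClosed ((fun t : ℝ => (t : ℂ) * lam) '' Icc 0 1) :=
      (isCompact_Icc.image (by continuity)).isClosed
    have hmem : mu ∈ closure ((fun t : ℝ => (t : ℂ) * lam) '' Icc 0 1) := by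
      rw [Metric.mem_closure_iff]
      intro ε hε
      set V : Set Y := {z | ‖R f z - lam‖ < ε} with hV
      have hVo : IsOpen V := isOpen_lt (((R f).continuous.sub continuous_const).norm)
        continuous_const
      have hyV : y ∈ V := by simp [hV, hε, hlam]
      obtain ⟨v, hv0, hv1, hvicc⟩ := exists_continuous_zero_one_of_isClosed hVo.isClosed_compl
        (isClosed_singleton : IsClosed {y})
        (by rw [disjoint_singleton_right]; simpa using hyV)
      obtain ⟨g, hg, hgx⟩ := hx₀ v (hv1 rfl) hvicc
      have hmu' : mu ∈ range ⇑(R f * cplx v) := by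
        have h2 : mu ∈ range ⇑(f * g) := ⟨x₀, by simp [ContinuousMap.mul_apply, hgx, hmu]⟩
        rw [← hr f g, hg] at h2
        exact h2
      obtain ⟨y', hy'⟩ := hmu'
      rw [ContinuousMap.mul_apply, cplx_apply] at hy'
      by_cases hvz : v y' = 0
      · refine ⟨0, ⟨0, by simp, by simp⟩, ?_⟩
        have : mu = 0 := by rw [← hy', hvz]; simp
        simpa [this] using hε
      · have hy'V : y' ∈ V := by
          by_contra hcon
          exact hvz (hv0 hcon)
        refine ⟨(v y' : ℂ) * lam, ⟨v y', hvicc y', rfl⟩, ?_⟩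
        rw [dist_eq_norm, ← hy']
        have : R f y' * (v y') - (v y') * lam = (v y' : ℂ) * (R f y' - lam) := by ring
        rw [this, norm_mul, Complex.norm_real, Real.norm_eq_abs]
        calc |v y'| * ‖R f y' - lam‖ ≤ 1 * ‖R f y' - lam‖ := by
              refine mul_le_mul_of_nonneg_right ?_ (norm_nonneg _)
              rw [abs_of_nonneg (hvicc y').1]; exact (hvicc y').2
          _ = ‖R f y' - lam‖ := one_mul _
          _ < ε := hy'V
    rw [hcl.closure_eq] at hmem
    obtain ⟨t, htI, hteq⟩ := hmem
    exact ⟨t, htI, hteq.symm⟩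
  -- Step (c) : ‖lam‖ ≤ ‖mu‖
  have hge : ‖lam‖ ≤ ‖mu‖ := by
    by_contra hlt
    push_neg at hlt
    set c : ℝ := (‖mu‖ + ‖lam‖) / 2 with hc
    have hc0 : 0 ≤ c := by
      have := norm_nonneg mu; have := norm_nonneg lam; simp only [hc]; linarith
    have hclam : c < ‖lam‖ := by simp only [hc]; linarith
    have hmuc : ‖mu‖ < c := by simp only [hc]; linarith
    set W : Set X := {x | ‖f x‖ < c} with hW
    have hWo : IsOpen W := isOpen_lt (f.continuous.norm) continuous_const
    have hxW : x₀ ∈ W := hmuc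
    obtain ⟨h, h0, h1, hicc⟩ := exists_continuous_zero_one_of_isClosed hWo.isClosed_compl
      (isClosed_singleton : IsClosed {x₀})
      (by rw [disjoint_singleton_right]; simpa using hxW)
    have hZ : R (cplx h) y = 1 := claimZ R hone hr hx₀ hicc (h1 rfl)
    have hle1 : ‖lam‖ ≤ ‖R f * R (cplx h)‖ := by
      have : ‖(R f * R (cplx h)) y‖ = ‖lam‖ := by
        simp [ContinuousMap.mul_apply, hZ, hlam]
      rw [← this]; exact (R f * R (cplx h)).norm_coe_le_norm y
    rw [norm_eq_of_range_eq (hr f (cplx h))] at hle1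
    have hub : ‖f * cplx h‖ ≤ c := by
      refine ((f * cplx h).norm_le hc0).2 fun x => ?_
      by_cases hx : x ∈ W
      · rw [ContinuousMap.mul_apply, norm_mul]
        have h1' : ‖cplx h x‖ ≤ 1 := by
          simp only [cplx_apply, Complex.norm_real, Real.norm_eq_abs]
          rw [abs_of_nonneg (hicc x).1]; exact (hicc x).2
        calc ‖f x‖ * ‖cplx h x‖ ≤ c * 1 :=
              mul_le_mul (le_of_lt hx) h1' (norm_nonneg _) hc0
          _ = c := mul_one c
      · have : h x = 0 := h0 hx
        simp [ContinuousMap.mul_apply, this, hc0]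
    linarith
  obtain ⟨t, htI, hteq⟩ := hseg
  by_cases hlam0 : lam = 0
  · rw [hlam0] at hteq
    rw [hlam0]
    simpa using hteq.symm
  · have hnrm : ‖mu‖ = t * ‖lam‖ := by
      rw [hteq, norm_mul, Complex.norm_real, Real.norm_eq_abs, abs_of_nonneg htI.1]
    have hlampos : 0 < ‖lam‖ := norm_pos_iff.2 hlam0
    have ht1 : t = 1 := by nlinarith [htI.2]
    rw [hteq, ht1]
    norm_num

theorem core [Nonempty X] [Nonempty Y] (hsurj : Function.Surjective R) (hone : R 1 = 1)
    (hr : ∀ f g : C(X, ℂ), range ⇑(R f * R g) = range ⇑(f * g)) :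
    ∃ Φ : Y ≃ₜ X, ∀ (f : C(X, ℂ)) (y : Y), R f y = f (Φ y) := by
  classical
  have key : ∀ y : Y, ∃ x : X, ∀ f : C(X, ℂ), R f y = f x := by
    intro y
    have key0 : ∃ x : X, ∀ v : C(Y, ℝ), v y = 1 → (∀ z, v z ∈ Icc (0:ℝ) 1) →
        ∃ g : C(X, ℂ), R g = cplx v ∧ g x = 1 := by
      set ι := {v : C(Y, ℝ) // v y = 1 ∧ ∀ z, v z ∈ Icc (0:ℝ) 1} with hι
      let G : ι → C(X, ℂ) := fun v => Function.surjInv hsurj (cplx v.1)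
      have hG : ∀ v : ι, R (G v) = cplx v.1 := fun v => Function.surjInv_eq hsurj _
      set Z : ι → Set X := fun v => {x | G v x = 1} with hZ
      have hZc : ∀ v, IsClosed (Z v) :=
        fun v => isClosed_eq (G v).continuous continuous_const
      have hne : (⋂ v, Z v).Nonempty := by
        by_contra hemp
        rw [not_nonempty_iff_eq_empty] at hemp
        obtain ⟨s, hs⟩ := IsCompact.elim_finite_subfamily_closed isCompact_univ Z hZc
          (by rw [hemp, inter_empty])
        set vp : C(Y, ℝ) := ∏ i ∈ s, i.1 with hvp
        have hvpap : ∀ z, vp z = ∏ i ∈ s, i.1 z := fun z => by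
          rw [hvp, ContinuousMap.prod_apply]
        have hvpy : vp y = 1 := by
          rw [hvpap]; exact Finset.prod_eq_one fun i _ => i.2.1
        have hvp0 : ∀ z, 0 ≤ vp z := fun z => by
          rw [hvpap]; exact Finset.prod_nonneg fun i _ => (i.2.2 z).1
        have hvpicc : ∀ z, vp z ∈ Icc (0:ℝ) 1 := fun z => by
          refine ⟨hvp0 z, ?_⟩
          rw [hvpap]
          exact Finset.prod_le_one (fun i _ => (i.2.2 z).1) (fun i _ => (i.2.2 z).2)
        have hvple : ∀ i ∈ s, ∀ z, vp z ≤ i.1 z := by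
          intro i hi z
          rw [hvpap]
          rw [← Finset.mul_prod_erase s (fun j => j.1 z) hi]
          have h1 : (∏ j ∈ s.erase i, j.1 z) ≤ 1 :=
            Finset.prod_le_one (fun j _ => (j.2.2 z).1) (fun j _ => (j.2.2 z).2)
          have h2 : 0 ≤ ∏ j ∈ s.erase i, j.1 z :=
            Finset.prod_nonneg (fun j _ => (j.2.2 z).1)
          calc i.1 z * ∏ j ∈ s.erase i, j.1 z ≤ i.1 z * 1 :=
                mul_le_mul_of_nonneg_left h1 (i.2.2 z).1
            _ = i.1 z := mul_one _
        set ivp : ι := ⟨vp, hvpy, hvpicc⟩ with hivp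
        have h1r : (1 : ℂ) ∈ range ⇑(G ivp) := by
          have h1 : range ⇑(G ivp) = range ⇑(cplx vp) := by
            rw [← hrg R hone hr (G ivp), hG ivp]
          rw [h1]
          exact ⟨y, by simp [hvpy]⟩
        obtain ⟨xs, hxs⟩ := h1r
        have hmem : xs ∈ univ ∩ ⋂ i ∈ s, Z i := by
          refine ⟨mem_univ xs, ?_⟩
          refine mem_iInter₂.2 fun i hi => ?_
          exact sub1 R hone hr (hG ivp) (hG i) i.2.2 hvp0 (hvple i hi) hxs
        rw [hs] at hmem
        exact hmem
      obtain ⟨x₀, hx₀⟩ := hne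
      refine ⟨x₀, fun v hv1 hvicc => ⟨G ⟨v, hv1, hvicc⟩, hG _, ?_⟩⟩
      exact mem_iInter.1 hx₀ ⟨v, hv1, hvicc⟩
    obtain ⟨x, hx⟩ := key0
    exact ⟨x, fun f => value R hone hr hx f⟩
  choose φ hφ using key
  have hcont : Continuous φ := by
    rw [continuous_def]
    intro U hU
    rw [isOpen_iff_forall_mem_open]
    intro y hy
    obtain ⟨g, hg0, hg1, hgicc⟩ := exists_continuous_zero_one_of_isClosed hU.isClosed_compl
      (isClosed_singleton : IsClosed {φ y})
      (by rw [disjoint_singleton_right]; simpa using hy)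
    refine ⟨(fun z => R (cplx g) z) ⁻¹' {0}ᶜ, ?_, ?_, ?_⟩
    · intro z hz
      simp only [mem_preimage, mem_compl_iff, mem_singleton_iff] at hz
      rw [hφ z (cplx g)] at hz
      simp only [cplx_apply] at hz
      by_contra hcon
      exact hz (by rw [hg0 hcon]; simp)
    · exact (isOpen_compl_singleton).preimage (R (cplx g)).continuous
    · simp only [mem_preimage, mem_compl_iff, mem_singleton_iff]
      rw [hφ y (cplx g)]
      simp [hg1 rfl]
  have hinj : Function.Injective φ := by
    intro y y' hyy'
    by_contra hne
    obtain ⟨u, hu0, hu1, _⟩ := exists_continuous_zero_one_of_isClosed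
      (isClosed_singleton : IsClosed {y}) (isClosed_singleton : IsClosed {y'})
      (by rw [disjoint_singleton_right]; simpa using Ne.symm hne)
    obtain ⟨f, hf⟩ := hsurj (cplx u)
    have h1 : cplx u y = cplx u y' := by
      rw [← hf, hφ y f, hφ y' f, hyy']
    simp only [cplx_apply, hu0 (mem_singleton y), hu1 (mem_singleton y')] at h1
    norm_num at h1
  have hsurjφ : Function.Surjective φ := by
    intro x
    by_contra hx
    push_neg at hx
    have hxr : x ∉ Set.range φ := by
      rintro ⟨y, rfl⟩; exact hx y rfl
    have hK : IsClosed (Set.range φ) := (isCompact_range hcont).isClosed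
    obtain ⟨g, hg0, hg1, hgicc⟩ := exists_continuous_zero_one_of_isClosed hK
      (isClosed_singleton : IsClosed {x})
      (by rw [disjoint_singleton_right]; exact hxr)
    have hR0 : R (cplx g) = 0 := by
      ext y
      rw [hφ y (cplx g)]
      simp [hg0 (mem_range_self y)]
    have hr2 := hr (cplx g) (cplx g)
    rw [hR0] at hr2
    have hL : range ⇑((0 : C(Y, ℂ)) * 0) = {(0:ℂ)} := by
      simp only [mul_zero]
      ext z
      constructor
      · rintro ⟨y, rfl⟩; rfl
      · rintro rfl; exact ⟨Classical.arbitrary Y, rfl⟩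
    rw [hL] at hr2
    have : (cplx g * cplx g) x ∈ range ⇑(cplx g * cplx g) := mem_range_self x
    rw [← hr2] at this
    simp only [mem_singleton_iff, ContinuousMap.mul_apply, cplx_apply, hg1 rfl] at this
    norm_num at this
  let e : Y ≃ X := Equiv.ofBijective φ ⟨hinj, hsurjφ⟩
  have hecont : Continuous ⇑e := hcont
  refine ⟨hecont.homeoOfEquivCompactToT2, fun f y => hφ y f⟩

end Core

end Stmt19Aux

theorem stmt19 {X Y : Type*} [TopologicalSpace X] [CompactSpace X] [T2Space X]
    [TopologicalSpace Y] [CompactSpace Y] [T2Space Y]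
    (a : ℂ) (T : C(X, ℂ) → C(Y, ℂ)) (hTsurj : Function.Surjective T)
    (hT : ∀ f g : C(X, ℂ),
      spectrum ℂ (T f * T g + a • T f + a • T g + (a ^ 2) • 1) =
        spectrum ℂ (f * g + a • f + a • g + (a ^ 2) • 1)) :
    ∃ (η : C(Y, ℂ)) (Φ : Y ≃ₜ X), (∀ y : Y, η y = 1 ∨ η y = -1) ∧
      ∀ (f : C(X, ℂ)) (y : Y), T f y = η y * f (Φ y) + a * (η y - 1) := by
  classical
  open Stmt19Aux in
  rcases isEmpty_or_nonempty X with hX | hX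
  · -- degenerate case: X empty forces Y empty
    have hsub : Subsingleton C(X, ℂ) := ⟨fun f g => by ext x; exact (hX.false x).elim⟩
    have hY : IsEmpty Y := by
      by_contra hY'
      rw [not_isEmpty_iff] at hY'
      obtain ⟨y⟩ := hY'
      obtain ⟨f, hf⟩ := hTsurj 0
      obtain ⟨g, hg⟩ := hTsurj 1
      have : (0 : C(Y, ℂ)) = 1 := by rw [← hf, ← hg, Subsingleton.elim f g]
      have h2 : (0 : ℂ) = 1 := congrArg (fun u : C(Y, ℂ) => u y) this
      norm_num at h2
    refine ⟨1, ⟨Equiv.equivOfIsEmpty Y X, ?_, ?_⟩, fun y => (hY.false y).elim,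
      fun f y => (hY.false y).elim⟩
    · exact ⟨fun s _ => by rw [Set.eq_empty_of_isEmpty (_ ⁻¹' s)]; exact isOpen_empty⟩
    · exact ⟨fun s _ => by rw [Set.eq_empty_of_isEmpty (_ ⁻¹' s)]; exact isOpen_empty⟩
  · -- main case
    set S : C(X, ℂ) → C(Y, ℂ) := fun f => T (f - a • 1) + a • 1 with hS
    have hSpec : ∀ f g : C(X, ℂ), Set.range ⇑(S f * S g) = Set.range ⇑(f * g) := by
      intro f g
      have h1 : T (f - a • 1) * T (g - a • 1) + a • T (f - a • 1) + a • T (g - a • 1)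
          + (a ^ 2) • 1 = S f * S g := by
        ext y
        simp only [hS, ContinuousMap.add_apply, ContinuousMap.mul_apply,
          ContinuousMap.smul_apply, ContinuousMap.one_apply, smul_eq_mul]
        ring
      have h2 : (f - a • 1) * (g - a • 1) + a • (f - a • 1) + a • (g - a • 1)
          + (a ^ 2) • 1 = f * g := by
        ext x
        simp only [ContinuousMap.add_apply, ContinuousMap.mul_apply, ContinuousMap.sub_apply,
          ContinuousMap.smul_apply, ContinuousMap.one_apply, smul_eq_mul]
        ring
      have h3 := hT (f - a • 1) (g - a • 1)
      rw [h1, h2, ContinuousMap.spectrum_eq_range, ContinuousMap.spectrum_eq_range] at h3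
      exact h3
    have hSsurj : Function.Surjective S := by
      intro u
      obtain ⟨f, hf⟩ := hTsurj (u - a • 1)
      refine ⟨f + a • 1, ?_⟩
      rw [hS]
      simp only [add_sub_cancel_right, hf, sub_add_cancel]
    have hNY : Nonempty Y := by
      by_contra h
      have hYe : IsEmpty Y := not_nonempty_iff.mp h
      have h3 := hSpec 1 1
      rw [Set.range_eq_empty ⇑(S 1 * S 1)] at h3
      have : ((1:C(X,ℂ)) * 1) (Classical.arbitrary X) ∈ Set.range ⇑((1:C(X,ℂ)) * 1) :=
        Set.mem_range_self _
      rw [← h3] at this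
      exact absurd this (Set.notMem_empty _)
    set ε : C(Y, ℂ) := S 1 with hε
    have hεsq : ∀ y, ε y * ε y = 1 := by
      intro y
      have h3 := hSpec 1 1
      have hone : Set.range ⇑((1:C(X,ℂ)) * 1) = {(1:ℂ)} := by
        rw [mul_one]
        ext z
        constructor
        · rintro ⟨x, rfl⟩; rfl
        · rintro rfl; exact ⟨Classical.arbitrary X, rfl⟩
      rw [hone] at h3
      have : (S 1 * S 1) y ∈ Set.range ⇑(S 1 * S 1) := Set.mem_range_self y
      rw [h3] at this
      simpa [ContinuousMap.mul_apply] using this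
    have hεmul : ε * ε = 1 := by
      ext y
      simpa [ContinuousMap.mul_apply] using hεsq y
    set R : C(X, ℂ) → C(Y, ℂ) := fun f => ε * S f with hR
    have hone : R 1 = 1 := hεmul
    have hrr : ∀ f g : C(X, ℂ), Set.range ⇑(R f * R g) = Set.range ⇑(f * g) := by
      intro f g
      have : R f * R g = S f * S g := by
        ext y
        simp only [hR, ContinuousMap.mul_apply]
        calc ε y * S f y * (ε y * S g y) = (ε y * ε y) * (S f y * S g y) := by ring
          _ = S f y * S g y := by rw [hεsq y, one_mul]
      rw [this]
      exact hSpec f g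
    have hRsurj : Function.Surjective R := by
      intro u
      obtain ⟨f, hf⟩ := hSsurj (ε * u)
      refine ⟨f, ?_⟩
      rw [hR]
      simp only [hf, ← mul_assoc, hεmul, one_mul]
    obtain ⟨Φ, hΦ⟩ := Stmt19Aux.core R hRsurj hone hrr
    refine ⟨ε, Φ, fun y => mul_self_eq_one_iff.mp (hεsq y), fun f y => ?_⟩
    have e1 : S (f + a • 1) = T f + a • 1 := by
      rw [hS]; simp only [add_sub_cancel_right]
    have e2 : ε y * R (f + a • 1) y = S (f + a • 1) y := by
      rw [hR]
      simp only [ContinuousMap.mul_apply, ← mul_assoc, hεsq y, one_mul]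
    have e3 : R (f + a • 1) y = f (Φ y) + a := by
      rw [hΦ (f + a • 1) y]
      simp [ContinuousMap.add_apply, ContinuousMap.smul_apply, smul_eq_mul]
    have e4 : T f y + a = S (f + a • 1) y := by
      rw [e1]
      simp [ContinuousMap.add_apply, ContinuousMap.smul_apply, smul_eq_mul]
    rw [e3] at e2
    have : T f y + a = ε y * (f (Φ y) + a) := by rw [e4, ← e2]
    have h5 : T f y = ε y * (f (Φ y) + a) - a := by linear_combination this
    rw [h5]; ring
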